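/- Let M be a structure in a finite relational language and suppose A and B are k-cliques in M with A ∩ B ≠ ∅ and such that no element of a tuple in A ∖ B equals an element of a tuple in B ∖ A. Then A ∪ B is a k-clique. -/
import Mathlib


/- STATEMENT 11: Suppose `A` and `B` are `k`-cliques in `M` with `A ∩ B ≠ ∅` and no element
of a tuple of `A ∖ B` equals an element of a tuple of `B ∖ A`.  Then `A ∪ B` is a
`k`-clique. -/

open FirstOrder Language Set

universe u v w

namespace Stmt11

variable (L : FirstOrder.Language.{v, w})

/-- Equality of quantifier-free types of two tuples over a parameter set. -/
def QFTypeEqOn {M : Type u} [L.Structure M] {α : Type} (c c' : α → M) (A : Set M) : Prop :=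
  ∀ (n : ℕ) (φ : L.Formula (α ⊕ Fin n)), BoundedFormula.IsQF φ →
    ∀ e : Fin n → M, (∀ i, e i ∈ A) →
      (φ.Realize (Sum.elim c e) ↔ φ.Realize (Sum.elim c' e))

/-- Two `k`-tuples are exchangeable. -/
def Exchangeable {M : Type u} [L.Structure M] {k : ℕ} (a b : Fin k → M) : Prop :=
  Disjoint (Set.range a) (Set.range b) ∧
    QFTypeEqOn L (Sum.elim a b) (Sum.elim b a) ((Set.range a ∪ Set.range b)ᶜ)

/-- A `k`-clique. -/
def IsKClique {M : Type u} [L.Structure M] (k : ℕ) (C : Set (Fin k → M)) : Prop :=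
  C.Nonempty ∧ (∀ a ∈ C, Function.Injective a) ∧
    ∀ a ∈ C, ∀ b ∈ C, a ≠ b → Exchangeable L a b

variable {M : Type u} [L.Structure M] {k : ℕ}

lemma isQF_relabel {α β : Type} {φ : L.Formula α} (h : BoundedFormula.IsQF φ) (g : α → β) :
    BoundedFormula.IsQF (φ.relabel g) := h.relabel _

lemma exch_realize {u v : Fin k → M} (hex : Exchangeable L u v) {β : Type} [Finite β]
    (φ : L.Formula ((Fin k ⊕ Fin k) ⊕ β)) (hqf : BoundedFormula.IsQF φ) (e : β → M)
    (he : ∀ i, e i ∉ Set.range u ∪ Set.range v) :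
    φ.Realize (Sum.elim (Sum.elim u v) e) ↔ φ.Realize (Sum.elim (Sum.elim v u) e) := by
  obtain ⟨n, ⟨eqv⟩⟩ := Finite.exists_equiv_fin β
  let g : (Fin k ⊕ Fin k) ⊕ β → (Fin k ⊕ Fin k) ⊕ Fin n := Sum.map id eqv
  have h := hex.2 n (φ.relabel g) (isQF_relabel L hqf g) (e ∘ eqv.symm)
    (fun i => Set.mem_compl (he (eqv.symm i)))
  rw [Formula.realize_relabel, Formula.realize_relabel] at h
  convert h using 2 <;> funext x <;> rcases x with (x|x)|x <;> simp [g]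

lemma swap12 {p q r : Fin k → M} {β : Type} [Finite β] {e : β → M}
    (hex : Exchangeable L p q)
    (ψ : L.Formula (((Fin k ⊕ Fin k) ⊕ Fin k) ⊕ β)) (hqf : BoundedFormula.IsQF ψ)
    (hr : ∀ j, r j ∉ Set.range p ∪ Set.range q)
    (he : ∀ i, e i ∉ Set.range p ∪ Set.range q) :
    ψ.Realize (Sum.elim (Sum.elim (Sum.elim p q) r) e) ↔
      ψ.Realize (Sum.elim (Sum.elim (Sum.elim q p) r) e) := by
  let g : (((Fin k ⊕ Fin k) ⊕ Fin k) ⊕ β) → ((Fin k ⊕ Fin k) ⊕ (Fin k ⊕ β)) :=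
    Sum.elim (Sum.elim Sum.inl (Sum.inr ∘ Sum.inl)) (Sum.inr ∘ Sum.inr)
  have h := exch_realize L hex (ψ.relabel g) (isQF_relabel L hqf g) (Sum.elim r e)
    (fun i => by rcases i with j | i; exacts [hr j, he i])
  rw [Formula.realize_relabel, Formula.realize_relabel] at h
  convert h using 2 <;> funext x <;> rcases x with ((x|x)|x)|x <;> rfl

lemma swap13 {p q r : Fin k → M} {β : Type} [Finite β] {e : β → M}
    (hex : Exchangeable L p r)
    (ψ : L.Formula (((Fin k ⊕ Fin k) ⊕ Fin k) ⊕ β)) (hqf : BoundedFormula.IsQF ψ)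
    (hq : ∀ j, q j ∉ Set.range p ∪ Set.range r)
    (he : ∀ i, e i ∉ Set.range p ∪ Set.range r) :
    ψ.Realize (Sum.elim (Sum.elim (Sum.elim p q) r) e) ↔
      ψ.Realize (Sum.elim (Sum.elim (Sum.elim r q) p) e) := by
  let g : (((Fin k ⊕ Fin k) ⊕ Fin k) ⊕ β) → ((Fin k ⊕ Fin k) ⊕ (Fin k ⊕ β)) :=
    Sum.elim (Sum.elim (Sum.elim (Sum.inl ∘ Sum.inl) (Sum.inr ∘ Sum.inl)) (Sum.inl ∘ Sum.inr))
      (Sum.inr ∘ Sum.inr)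
  have h := exch_realize L hex (ψ.relabel g) (isQF_relabel L hqf g) (Sum.elim q e)
    (fun i => by rcases i with j | i; exacts [hq j, he i])
  rw [Formula.realize_relabel, Formula.realize_relabel] at h
  convert h using 2 <;> funext x <;> rcases x with ((x|x)|x)|x <;> rfl

lemma swap23 {p q r : Fin k → M} {β : Type} [Finite β] {e : β → M}
    (hex : Exchangeable L q r)
    (ψ : L.Formula (((Fin k ⊕ Fin k) ⊕ Fin k) ⊕ β)) (hqf : BoundedFormula.IsQF ψ)
    (hp : ∀ j, p j ∉ Set.range q ∪ Set.range r)
    (he : ∀ i, e i ∉ Set.range q ∪ Set.range r) :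
    ψ.Realize (Sum.elim (Sum.elim (Sum.elim p q) r) e) ↔
      ψ.Realize (Sum.elim (Sum.elim (Sum.elim p r) q) e) := by
  let g : (((Fin k ⊕ Fin k) ⊕ Fin k) ⊕ β) → ((Fin k ⊕ Fin k) ⊕ (Fin k ⊕ β)) :=
    Sum.elim (Sum.elim (Sum.elim (Sum.inr ∘ Sum.inl) (Sum.inl ∘ Sum.inl)) (Sum.inl ∘ Sum.inr))
      (Sum.inr ∘ Sum.inr)
  have h := exch_realize L hex (ψ.relabel g) (isQF_relabel L hqf g) (Sum.elim p e)
    (fun i => by rcases i with j | i; exacts [hp j, he i])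
  rw [Formula.realize_relabel, Formula.realize_relabel] at h
  convert h using 2 <;> funext x <;> rcases x with ((x|x)|x)|x <;> rfl

lemma exch_of_sep {A B : Set (Fin k → M)}
    (hA : IsKClique L k A) (hB : IsKClique L k B)
    (hAB : (A ∩ B).Nonempty)
    (hsep : ∀ a ∈ A \ B, ∀ b ∈ B \ A, ∀ i j : Fin k, a i ≠ b j)
    {a b : Fin k → M} (ha : a ∈ A \ B) (hb : b ∈ B \ A) :
    Exchangeable L a b := by
  classical
  obtain ⟨c, hcA, hcB⟩ := hAB
  have hca : c ≠ a := fun h => ha.2 (h ▸ hcB)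
  have hcb : c ≠ b := fun h => hb.2 (h ▸ hcA)
  have eac : Exchangeable L a c := hA.2.2 a ha.1 c hcA (Ne.symm hca)
  have eca : Exchangeable L c a := hA.2.2 c hcA a ha.1 hca
  have ecb : Exchangeable L c b := hB.2.2 c hcB b hb.1 hcb
  have dab : Disjoint (Set.range a) (Set.range b) := by
    rw [Set.disjoint_left]
    rintro x ⟨i, rfl⟩ ⟨j, hj⟩
    exact hsep a ha b hb i j hj.symm
  have hbnac : ∀ j, b j ∉ Set.range a ∪ Set.range c := by
    rintro j (hj | hj)
    · exact Set.disjoint_right.mp dab (Set.mem_range_self j) hj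
    · exact Set.disjoint_left.mp ecb.1 hj (Set.mem_range_self j)
  have hbnca : ∀ j, b j ∉ Set.range c ∪ Set.range a := fun j hj =>
    hbnac j (Or.symm (by simpa using hj))
  have hanbc : ∀ j, a j ∉ Set.range c ∪ Set.range b := by
    rintro j (hj | hj)
    · exact Set.disjoint_right.mp eca.1 (Set.mem_range_self j) hj
    · exact Set.disjoint_left.mp dab (Set.mem_range_self j) hj
  refine ⟨dab, ?_⟩
  intro n φ hqf e he
  have he' : ∀ i, e i ∉ Set.range a ∪ Set.range b := fun i => he i
  let β := {i : Fin n // e i ∉ Set.range c}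
  let h : (Fin k ⊕ Fin k) ⊕ Fin n → (((Fin k ⊕ Fin k) ⊕ Fin k) ⊕ β) := fun t =>
    match t with
    | Sum.inl (Sum.inl i) => Sum.inl (Sum.inl (Sum.inl i))
    | Sum.inl (Sum.inr i) => Sum.inl (Sum.inl (Sum.inr i))
    | Sum.inr i =>
        if hm : e i ∈ Set.range c then Sum.inl (Sum.inr hm.choose) else Sum.inr ⟨i, hm⟩
  let eβ : β → M := fun i => e i.1
  have heβ1 : ∀ i : β, eβ i ∉ Set.range a ∪ Set.range c := by
    rintro i (hj | hj)
    · exact he' i.1 (Or.inl hj)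
    · exact i.2 hj
  have heβ2 : ∀ i : β, eβ i ∉ Set.range c ∪ Set.range b := by
    rintro i (hj | hj)
    · exact i.2 hj
    · exact he' i.1 (Or.inr hj)
  have heβ3 : ∀ i : β, eβ i ∉ Set.range c ∪ Set.range a := by
    rintro i (hj | hj)
    · exact i.2 hj
    · exact he' i.1 (Or.inl hj)
  let ψ := φ.relabel h
  have hψ : BoundedFormula.IsQF ψ := isQF_relabel L hqf h
  have s1 := swap13 L eac ψ hψ hbnac heβ1
  have s2 := swap12 L ecb ψ hψ hanbc heβ2
  have s3 := swap23 L eca ψ hψ hbnca heβ3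
  have key := (s1.trans s2).trans s3
  have comp1 : Sum.elim (Sum.elim a b) e =
      (Sum.elim (Sum.elim (Sum.elim a b) c) eβ) ∘ h := by
    funext x
    rcases x with (x | x) | x
    · rfl
    · rfl
    · show e x = _
      simp only [h, Function.comp_apply]
      split_ifs with hm
      · exact hm.choose_spec.symm
      · rfl
  have comp2 : Sum.elim (Sum.elim b a) e =
      (Sum.elim (Sum.elim (Sum.elim b a) c) eβ) ∘ h := by
    funext x
    rcases x with (x | x) | x
    · rfl
    · rfl
    · show e x = _
      simp only [h, Function.comp_apply]
      split_ifs with hm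
      · exact hm.choose_spec.symm
      · rfl
  rw [comp1, comp2, ← Formula.realize_relabel, ← Formula.realize_relabel]
  exact key

/-- Two overlapping `k`-cliques whose relative complements do not share elements have a
`k`-clique as their union. -/
theorem isKClique_union
    [L.IsRelational] [Finite (Σ n, L.Relations n)]
    (M : Type u) [L.Structure M] (k : ℕ) (A B : Set (Fin k → M))
    (hA : IsKClique L k A) (hB : IsKClique L k B)
    (hAB : (A ∩ B).Nonempty)
    (hsep : ∀ a ∈ A \ B, ∀ b ∈ B \ A, ∀ i j : Fin k, a i ≠ b j) :
    IsKClique L k (A ∪ B) := by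
  have hBA : (B ∩ A).Nonempty := by rwa [Set.inter_comm]
  have hsep' : ∀ a ∈ B \ A, ∀ b ∈ A \ B, ∀ i j : Fin k, a i ≠ b j :=
    fun a haa b hbb i j => (hsep b hbb a haa j i).symm
  refine ⟨hA.1.mono Set.subset_union_left, ?_, ?_⟩
  · rintro x (hx | hx)
    · exact hA.2.1 x hx
    · exact hB.2.1 x hx
  · rintro x (hx | hx) y (hy | hy) hxy
    · exact hA.2.2 x hx y hy hxy
    · by_cases hx' : x ∈ B
      · exact hB.2.2 x hx' y hy hxy
      · by_cases hy' : y ∈ A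
        · exact hA.2.2 x hx y hy' hxy
        · exact exch_of_sep L hA hB hAB hsep ⟨hx, hx'⟩ ⟨hy, hy'⟩
    · by_cases hx' : x ∈ A
      · exact hA.2.2 x hx' y hy hxy
      · by_cases hy' : y ∈ B
        · exact hB.2.2 x hx y hy' hxy
        · exact exch_of_sep L hB hA hBA hsep' ⟨hx, hx'⟩ ⟨hy, hy'⟩
    · exact hB.2.2 x hx y hy hxy

end Stmt11
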